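/- Fix ε, γ ∈ (0, 1/8] and a step size 0 < η ≤ 1, and consider gradient descent on the bivariate function L̂(r,s) := (1−ε)·ℓ(r) + ε·ℓ(−r/2 + 3γs), where ℓ is the logistic loss, starting from (r_1, s_1) = (0,0) with updates (r_{t+1}, s_{t+1}) = (r_t, s_t) − η∇L̂(r_t, s_t). Then for any t, if −r_t/2 + 3γs_t > 0, it must hold that t ≥ 19/(480γ²ε). -/

import Mathlib

set_option maxHeartbeats 1000000 in
/-- Lemma 7 of the paper. Fix `ε, γ ∈ (0, 1/8]` and a step
size `0 < η ≤ 1`, and consider gradient descent on the bivariate function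
`L̂(r,s) = (1−ε)ℓ(r) + εℓ(−r/2 + 3γs)` with `ℓ` the logistic loss, starting
from `(r₁, s₁) = (0,0)`; the updates are explicitly
`r_{t+1} = r_t − (1−ε)η ℓ'(r_t) + (εη/2) ℓ'(−r_t/2 + 3γ s_t)` and
`s_{t+1} = s_t − 3γεη ℓ'(−r_t/2 + 3γ s_t)`. Then for any `t` with
`−r_t/2 + 3γ s_t > 0`, we must have `t ≥ 19/(480γ²ε)`. -/
theorem stmt_15 (ε γ : ℝ) (hε : ε ∈ Set.Ioc (0 : ℝ) (1 / 8))
    (hγ : γ ∈ Set.Ioc (0 : ℝ) (1 / 8))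
    (η : ℝ) (hη0 : 0 < η) (hη1 : η ≤ 1)
    (ℓ ℓ' : ℝ → ℝ)
    (hℓ : ∀ z, ℓ z = Real.log (1 + Real.exp (-z)))
    (hderiv : ∀ z, HasDerivAt ℓ (ℓ' z) z)
    (r s : ℕ → ℝ) (hr1 : r 1 = 0) (hs1 : s 1 = 0)
    (hrrec : ∀ t, 1 ≤ t →
      r (t + 1) = r t - (1 - ε) * η * ℓ' (r t)
        + (ε * η / 2) * ℓ' (-(r t) / 2 + 3 * γ * s t))
    (hsrec : ∀ t, 1 ≤ t →
      s (t + 1) = s t - 3 * γ * ε * η * ℓ' (-(r t) / 2 + 3 * γ * s t)) :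
    ∀ t : ℕ, 1 ≤ t → 0 < -(r t) / 2 + 3 * γ * s t →
      19 / (480 * γ ^ 2 * ε) ≤ (t : ℝ) := by
  obtain ⟨hε0, hε8⟩ := hε
  obtain ⟨hγ0, hγ8⟩ := hγ
  -- closed form of ℓ'
  have hℓ'eq : ∀ z, ℓ' z = -(1 / (1 + Real.exp z)) := by
    intro z
    have hpos : (0:ℝ) < 1 + Real.exp (-z) := by positivity
    have h1 : HasDerivAt (fun z : ℝ => 1 + Real.exp (-z)) (-Real.exp (-z)) z := by
      have hneg : HasDerivAt (fun z : ℝ => -z) (-1) z := (hasDerivAt_id z).neg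
      have hexp : HasDerivAt (fun z : ℝ => Real.exp (-z)) (Real.exp (-z) * (-1)) z :=
        (Real.hasDerivAt_exp (-z)).comp z hneg
      simpa using hexp.const_add 1
    have hd : HasDerivAt (fun z : ℝ => Real.log (1 + Real.exp (-z)))
        (-(1 / (1 + Real.exp z))) z := by
      have := (Real.hasDerivAt_log (ne_of_gt hpos)).comp z h1
      convert this using 1
      · rfl
      · rfl
      · rfl
      have he : Real.exp (-z) = 1 / Real.exp z := by
        rw [Real.exp_neg]; exact (inv_eq_one_div _)
      have hez : (0:ℝ) < Real.exp z := Real.exp_pos z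
      rw [he]
      field_simp
      ring
    have h2 : HasDerivAt ℓ (ℓ' z) z := hderiv z
    have hfun : ℓ = fun z => Real.log (1 + Real.exp (-z)) := funext hℓ
    rw [hfun] at h2
    exact h2.unique hd
  have hub : ∀ z, ℓ' z < 0 := by
    intro z
    rw [hℓ'eq]
    have : (0:ℝ) < 1 / (1 + Real.exp z) := by positivity
    linarith
  have hlb : ∀ z, -1 ≤ ℓ' z := by
    intro z
    rw [hℓ'eq]
    have h1 : (1:ℝ) < 1 + Real.exp z := by nlinarith [Real.exp_pos z]
    have : 1 / (1 + Real.exp z) ≤ 1 := by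
      rw [div_le_one (by linarith)]; linarith
    linarith
  have hquarter : ∀ z, z ≤ 1 → ℓ' z ≤ -(1/4) := by
    intro z hz
    rw [hℓ'eq]
    have h1 : Real.exp z ≤ Real.exp 1 := Real.exp_le_exp.mpr hz
    have h2 : Real.exp 1 < 2.7182818286 := Real.exp_one_lt_d9
    have h3 : (0:ℝ) < 1 + Real.exp z := by positivity
    have : (1:ℝ)/4 ≤ 1 / (1 + Real.exp z) := by
      rw [div_le_div_iff₀ (by norm_num) h3]
      nlinarith
    linarith
  -- invariant: margin ≤ 0 or r ≥ (57/80) η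
  have hinv : ∀ t : ℕ, 1 ≤ t →
      (-(r t) / 2 + 3 * γ * s t ≤ 0 ∨ (57/80) * η ≤ r t) := by
    intro t ht
    induction t, ht using Nat.le_induction with
    | base => left; rw [hr1, hs1]; ring_nf; norm_num
    | succ t ht IH =>
      set A := ℓ' (r t) with hAdef
      set B := ℓ' (-(r t) / 2 + 3 * γ * s t) with hBdef
      have hA1 : A < 0 := hub _
      have hA2 : -1 ≤ A := hlb _
      have hB1 : B < 0 := hub _
      have hB2 : -1 ≤ B := hlb _
      have hrr := hrrec t ht
      have hss := hsrec t ht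
      have hεη : (0:ℝ) ≤ ε * η := le_of_lt (mul_pos hε0 hη0)
      have c1 : -(ε * η * B) ≤ ε * η := by nlinarith
      have c5 : ε * η ≤ η / 8 := by nlinarith
      have hBneg : 0 ≤ -(ε * η * B) := by nlinarith
      have hg : γ * γ ≤ 1/64 := by nlinarith
      have c2 : -(γ * γ * (ε * η * B)) ≤ (1/64) * (ε * η) := by
        nlinarith [mul_le_mul hg c1 hBneg (by norm_num : (0:ℝ) ≤ 1/64)]
      have c6 : 0 ≤ -((1 - ε) * η * A) := by nlinarith
      rcases le_or_gt (r t) 1 with hr1' | hr1'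
      · have hA3 : A ≤ -(1/4) := hquarter _ hr1'
        have c3 : (1 - ε) * η * A ≤ -((1 - ε) * η / 4) := by nlinarith
        rcases IH with hm | hr
        · left
          rw [hrr, hss]
          linarith [c1, c2, c3, c5]
        · right
          rw [hrr]
          linarith [c1, c3, c5]
      · right
        have c7 : ε * η ≤ 1/8 := by nlinarith
        rw [hrr]
        linarith [c1, c6, c7]
  -- s bound
  have hsb : ∀ t : ℕ, 1 ≤ t → s t ≤ 3 * γ * ε * η * ((t:ℝ) - 1) := by
    intro t ht
    induction t, ht using Nat.le_induction with
    | base => rw [hs1]; norm_num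
    | succ t ht IH =>
      have hB2 := hlb (-(r t) / 2 + 3 * γ * s t)
      have hss := hsrec t ht
      rw [hss]
      push_cast
      nlinarith [mul_pos (mul_pos (mul_pos (by norm_num : (0:ℝ) < 3) hγ0) hε0) hη0]
  -- conclude
  intro t ht hm
  have hr : (57/80) * η ≤ r t := by
    rcases hinv t ht with h | h
    · linarith
    · exact h
  have hs' := hsb t ht
  have ht1 : (1:ℝ) ≤ (t:ℝ) := by exact_mod_cast ht
  have key : (57/160) * η < 9 * γ^2 * ε * η * ((t:ℝ) - 1) := by
    nlinarith [mul_pos hγ0 hε0]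
  have hγε : (0:ℝ) < 480 * γ^2 * ε := by positivity
  rw [div_le_iff₀ hγε]
  nlinarith [mul_pos (mul_pos hγ0 hγ0) hε0, sq_nonneg γ]
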